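/- For all x with 0 < x < π, we have x < sin(x) + 10·(4·sin(x/2)² − sin(x)²)/(12·sin(x/2) + 9·sin(x)). -/

import Mathlib

open Real

noncomputable def huyF (t : ℝ) : ℝ :=
  2 * Real.sin t * Real.cos t + 20 * Real.sin t ^ 3 / (3 * (2 + 3 * Real.cos t)) - 2 * t

lemma huyF_hasDerivAt (t : ℝ) (ht : (2 : ℝ) + 3 * Real.cos t ≠ 0) :
    HasDerivAt huyF
      (4 * (1 - Real.cos t ^ 2) * (1 - Real.cos t) ^ 2 / (2 + 3 * Real.cos t) ^ 2) t := by
  have hs := Real.hasDerivAt_sin t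
  have hc := Real.hasDerivAt_cos t
  have h1 : HasDerivAt (fun u => 2 * Real.sin u * Real.cos u)
      (2 * Real.cos t * Real.cos t + 2 * Real.sin t * (-Real.sin t)) t :=
    (hs.const_mul 2).mul hc
  have h2 : HasDerivAt (fun u => 20 * Real.sin u ^ 3)
      (20 * (3 * Real.sin t ^ 2 * Real.cos t)) t := by
    have := (hs.fun_pow 3).const_mul 20
    exact this.congr_deriv (by norm_num)
  have h3 : HasDerivAt (fun u => 3 * (2 + 3 * Real.cos u)) (3 * (3 * (-Real.sin t))) t :=
    ((hc.const_mul 3).const_add 2).const_mul 3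
  have hne : (3 : ℝ) * (2 + 3 * Real.cos t) ≠ 0 := by
    intro h; apply ht; linarith [mul_eq_zero.mp h |>.resolve_left (by norm_num)]
  have h4 := h2.div h3 hne
  have h5 := (h1.add h4).sub ((hasDerivAt_id t).const_mul 2)
  refine HasDerivAt.congr_deriv (f := huyF) h5 (Eq.symm ?_)
  have hp := Real.sin_sq_add_cos_sq t
  field_simp
  have hD : (2 + Real.cos t * 3) ^ 2 ≠ 0 := pow_ne_zero 2 (by rwa [mul_comm] at ht)
  rw [div_eq_iff hD, sub_mul, add_mul, div_mul_cancel₀ _ hD]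
  linear_combination (-(12:ℝ) - 16 * Real.cos t - 22 * Real.cos t ^ 2
    - 20 * Real.sin t ^ 2) * hp

lemma huyF_pos {t : ℝ} (h0 : 0 < t) (h1 : t < Real.pi / 2) : 0 < huyF t := by
  have hmono : StrictMonoOn huyF (Set.Icc 0 (Real.pi / 2)) := by
    apply strictMonoOn_of_deriv_pos (convex_Icc _ _)
    · apply ContinuousOn.sub
      apply ContinuousOn.add
      · fun_prop
      · apply ContinuousOn.div
        · fun_prop
        · fun_prop
        · intro u hu
          have : 0 ≤ Real.cos u := Real.cos_nonneg_of_mem_Icc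
            ⟨by linarith [hu.1, Real.pi_pos], hu.2⟩
          positivity
      · fun_prop
    · intro u hu
      rw [interior_Icc] at hu
      have hpi := Real.pi_pos
      have hc0 : 0 < Real.cos u := Real.cos_pos_of_mem_Ioo ⟨by linarith [hu.1], hu.2⟩
      have hsu : 0 < Real.sin u := Real.sin_pos_of_pos_of_lt_pi hu.1 (by linarith [hu.2])
      have hp := Real.sin_sq_add_cos_sq u
      have hc1 : Real.cos u < 1 := by nlinarith
      have hne : (2 : ℝ) + 3 * Real.cos u ≠ 0 := by positivity
      rw [(huyF_hasDerivAt u hne).deriv]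
      have h2 : 0 < 1 - Real.cos u ^ 2 := by nlinarith
      have h3 : 0 < (1 - Real.cos u) ^ 2 := by nlinarith
      apply div_pos
      · exact mul_pos (by linarith) h3
      · have : (0:ℝ) < 2 + 3 * Real.cos u := by linarith
        positivity
  have h00 : (0 : ℝ) ∈ Set.Icc 0 (Real.pi / 2) := ⟨le_refl _, by linarith [Real.pi_pos]⟩
  have ht : t ∈ Set.Icc 0 (Real.pi / 2) := ⟨le_of_lt h0, le_of_lt h1⟩
  have := hmono h00 ht h0
  simpa [huyF] using this

theorem huygens_upper_barycentric (x : ℝ) (h0 : 0 < x) (h1 : x < Real.pi) :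
    x < Real.sin x +
      10 * (4 * Real.sin (x / 2) ^ 2 - Real.sin x ^ 2) /
        (12 * Real.sin (x / 2) + 9 * Real.sin x) := by
  have hkey : 0 < huyF (x / 2) := huyF_pos (by linarith) (by linarith)
  have hsinx : Real.sin x = 2 * Real.sin (x / 2) * Real.cos (x / 2) := by
    rw [← Real.sin_two_mul]; ring_nf
  have hs : 0 < Real.sin (x / 2) :=
    Real.sin_pos_of_pos_of_lt_pi (by linarith) (by linarith [Real.pi_pos])
  have hc : 0 < Real.cos (x / 2) :=
    Real.cos_pos_of_mem_Ioo ⟨by linarith [Real.pi_pos], by linarith⟩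
  have hp := Real.sin_sq_add_cos_sq (x / 2)
  have hden : (0:ℝ) < 12 * Real.sin (x / 2) + 9 * Real.sin x := by
    rw [hsinx]; positivity
  rw [huyF] at hkey
  have hne : (2:ℝ) + 3 * Real.cos (x / 2) ≠ 0 := by positivity
  have heq : Real.sin x +
      10 * (4 * Real.sin (x / 2) ^ 2 - Real.sin x ^ 2) /
        (12 * Real.sin (x / 2) + 9 * Real.sin x)
      = 2 * Real.sin (x / 2) * Real.cos (x / 2) +
        20 * Real.sin (x / 2) ^ 3 / (3 * (2 + 3 * Real.cos (x / 2))) := by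
    rw [hsinx]
    rw [hsinx] at hden
    field_simp
    linear_combination (-(240:ℝ)
      - 360 * Real.cos (x / 2)) * hp
  rw [heq]
  linarith
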